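/- Let F = F_{2^n} and let E/F be an ordinary elliptic curve Y² + a1XY + a3Y = X³ + a2X² + a4X + a6 (a1 ≠ 0). Let P = (x, y) ∈ E(F) be a point that is not 2-torsion (so a1·x + a3 ≠ 0), and set b = a1(a1x + a3) ≠ 0. Then in F[X1, X2], with b6 = a3², b8 = a1²a6 + a1a3a4 + a2a3² + a4² (characteristic 2 reductions), the third summation polynomial T = S(X1, X2, x) satisfies: T/b² = ((1/b)X1X2)² + (1/b)X1X2 + ((x/b)(X1+X2))² + (a3/(b·a1))(X1+X2) + (b6·x + b8)/b², and moreover x/b + a3/(b·a1) = 1/a1². -/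

import Mathlib

open MvPolynomial

/-- For an ordinary elliptic curve over `F = F_{2ⁿ}` and `P = (x, y) ∈ E(F)` not `2`-torsion
(`a₁x + a₃ ≠ 0`), with `b = a₁(a₁x + a₃)`, the specialized third summation polynomial
`T = S(X₁, X₂, x)` satisfies
`T/b² = ((1/b)X₁X₂)² + (1/b)X₁X₂ + ((x/b)(X₁+X₂))² + (a₃/(ba₁))(X₁+X₂) + (b₆x + b₈)/b²`,
and moreover `x/b + a₃/(ba₁) = 1/a₁²`. -/
theorem stmt_15 (n : ℕ) (hn : n ≠ 0) (a1 a2 a3 a4 a6 x y : GaloisField 2 n)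
    (hcurve : y ^ 2 + a1 * x * y + a3 * y = x ^ 3 + a2 * x ^ 2 + a4 * x + a6)
    (hΔ : a1 ≠ 0) (h2tor : a1 * x + a3 ≠ 0) :
    let F := GaloisField 2 n
    let b : F := a1 * (a1 * x + a3)
    let b2 : F := a1 ^ 2
    let b4 : F := a1 * a3
    let b6 : F := a3 ^ 2
    let b8 : F := a1 ^ 2 * a6 + a1 * a3 * a4 + a2 * a3 ^ 2 + a4 ^ 2
    let X1 : MvPolynomial (Fin 2) F := X 0
    let X2 : MvPolynomial (Fin 2) F := X 1
    let T : MvPolynomial (Fin 2) F :=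
      X1 ^ 2 * X2 ^ 2 + X1 ^ 2 * C (x ^ 2) + X2 ^ 2 * C (x ^ 2) +
        C b2 * (X1 * X2 * C x) + C b4 * (X1 * X2 + X1 * C x + X2 * C x) +
        C b6 * (X1 + X2 + C x) + C b8
    C (1 / b ^ 2) * T =
        (C (1 / b) * X1 * X2) ^ 2 + C (1 / b) * X1 * X2 +
          (C (x / b) * (X1 + X2)) ^ 2 + C (a3 / (b * a1)) * (X1 + X2) +
          C ((b6 * x + b8) / b ^ 2) ∧
      x / b + a3 / (b * a1) = 1 / a1 ^ 2 := by
  intro F b b2 b4 b6 b8 X1 X2 T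
  have hb : b ≠ 0 := mul_ne_zero hΔ h2tor
  have htwo : (2 : MvPolynomial (Fin 2) F) = 0 := CharTwo.two_eq_zero
  constructor
  · have h1 : (C (1 / b ^ 2) : MvPolynomial (Fin 2) F) = C (1 / b) * C (1 / b) := by
      rw [← C_mul]; congr 1; rw [div_mul_div_comm, one_mul, sq]
    have h2 : (C (1 / b ^ 2) : MvPolynomial (Fin 2) F) * C (x ^ 2) = C (x / b) * C (x / b) := by
      rw [← C_mul, ← C_mul]; congr 1; field_simp; ring
    have h3 : (C (1 / b ^ 2) : MvPolynomial (Fin 2) F) * (C b2 * C x + C b4) = C (1 / b) := by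
      rw [← C_mul, ← C_add, ← C_mul]; congr 1
      show 1 / b ^ 2 * (a1 ^ 2 * x + a1 * a3) = 1 / b
      show 1 / (a1 * (a1 * x + a3)) ^ 2 * (a1 ^ 2 * x + a1 * a3) = 1 / (a1 * (a1 * x + a3))
      field_simp
    have h4 : (C (1 / b ^ 2) : MvPolynomial (Fin 2) F) * (C b4 * C x + C b6) =
        C (a3 / (b * a1)) := by
      rw [← C_mul, ← C_add, ← C_mul]; congr 1
      show 1 / (a1 * (a1 * x + a3)) ^ 2 * (a1 * a3 * x + a3 ^ 2) =
        a3 / (a1 * (a1 * x + a3) * a1)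
      field_simp
    have h5 : (C (1 / b ^ 2) : MvPolynomial (Fin 2) F) * (C b6 * C x + C b8) =
        C ((b6 * x + b8) / b ^ 2) := by
      rw [← C_mul, ← C_add, ← C_mul]; congr 1
      ring
    show C (1 / b ^ 2) *
      (X 0 ^ 2 * X 1 ^ 2 + X 0 ^ 2 * C (x ^ 2) + X 1 ^ 2 * C (x ^ 2) +
        C b2 * (X 0 * X 1 * C x) + C b4 * (X 0 * X 1 + X 0 * C x + X 1 * C x) +
        C b6 * (X 0 + X 1 + C x) + C b8) =
      (C (1 / b) * X 0 * X 1) ^ 2 + C (1 / b) * X 0 * X 1 +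
        (C (x / b) * (X 0 + X 1)) ^ 2 + C (a3 / (b * a1)) * (X 0 + X 1) +
        C ((b6 * x + b8) / b ^ 2)
    linear_combination (X 0 ^ 2 * X 1 ^ 2 : MvPolynomial (Fin 2) F) * h1 +
      (X 0 ^ 2 + X 1 ^ 2 : MvPolynomial (Fin 2) F) * h2 +
      (X 0 * X 1 : MvPolynomial (Fin 2) F) * h3 +
      (X 0 + X 1 : MvPolynomial (Fin 2) F) * h4 + h5 -
      (C (x / b) * C (x / b) * X 0 * X 1 : MvPolynomial (Fin 2) F) * htwo
  · show x / (a1 * (a1 * x + a3)) + a3 / (a1 * (a1 * x + a3) * a1) = 1 / a1 ^ 2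
    field_simp
    exact div_self (by rwa [mul_comm x a1])
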